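/- In Euclidean setting (β(x,y) = ½‖x-y‖²_B) with each f_i having L_f-Lipschitz gradients, the Basic Composite Subgradient Method satisfies ½‖x_{k+1}-x*‖²_B ≤ ½‖x_k-x*‖²_B - (1/L_f)[F(x_{k+1}) - F*], hence (1/T)Σ_{k=1}^T F(x_k) - F* ≤ L_f‖x₀-x*‖²_B/(2T). -/

import Mathlib

/-- Basic Composite Subgradient Method in the Euclidean smooth case:
per-step decrease and averaged rate `1/T Σ F(x_k) - F* ≤ L‖x₀-x*‖²/(2T)`. -/
theorem stmt_10 {E : Type*} [NormedAddCommGroup E] [InnerProductSpace ℝ E]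
    (m : ℕ) (hm : 0 < m) (f : Fin m → E → ℝ) (ψ : E → ℝ) (S : Set E)
    (hSconv : Convex ℝ S)
    (hconv : ∀ i, ConvexOn ℝ S (f i))
    (F : E → ℝ) (hF : ∀ y, F y = (⨆ i, f i y) + ψ y)
    (xstar : E) (hxstar : xstar ∈ S) (hFmin : ∀ y ∈ S, F xstar ≤ F y)
    (Fstar : ℝ) (hFstar : Fstar = F xstar)
    (L : ℝ) (hL : 0 < L)
    (x : ℕ → E) (hx : ∀ k, x k ∈ S)
    (g : ℕ → Fin m → E)
    (hsub : ∀ k i, ∀ y ∈ S, f i (x k) + (inner ℝ (g k i) (y - x k) : ℝ) ≤ f i y)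
    (hsmooth : ∀ k i, ∀ y ∈ S,
      f i y ≤ f i (x k) + (inner ℝ (g k i) (y - x k) : ℝ) + (1/2) * L * ‖x k - y‖^2)
    (ell : ℕ → E → ℝ)
    (hell : ∀ k y, ell k y = ⨆ i, (f i (x k) + (inner ℝ (g k i) (y - x k) : ℝ)))
    (hfeas : ∀ k, ell k (x (k+1)) + ψ (x (k+1)) ≤ Fstar)
    (hdec : ∀ k, ‖x (k+1) - xstar‖^2 ≤ ‖x k - xstar‖^2 - ‖x k - x (k+1)‖^2) :
    (∀ k, (1/2) * ‖x (k+1) - xstar‖^2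
        ≤ (1/2) * ‖x k - xstar‖^2 - (1/L) * (F (x (k+1)) - Fstar))
      ∧ ∀ T : ℕ, 1 ≤ T →
        (1/(T:ℝ)) * ∑ k ∈ Finset.Icc 1 T, F (x k) - Fstar
          ≤ L * ‖x 0 - xstar‖^2 / (2 * T) := by
  haveI : Nonempty (Fin m) := ⟨⟨0, hm⟩⟩
  -- Step lemma: F(x_{k+1}) - Fstar ≤ (L/2)‖x_k - x_{k+1}‖²
  have step : ∀ k, F (x (k+1)) - Fstar ≤ (1/2) * L * ‖x k - x (k+1)‖^2 := by
    intro k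
    have hsup : (⨆ i, f i (x (k+1)))
        ≤ ell k (x (k+1)) + (1/2) * L * ‖x k - x (k+1)‖^2 := by
      apply ciSup_le
      intro i
      have h1 := hsmooth k i (x (k+1)) (hx (k+1))
      have h2 : f i (x k) + (inner ℝ (g k i) (x (k+1) - x k) : ℝ) ≤ ell k (x (k+1)) := by
        rw [hell]
        exact le_ciSup (Finite.bddAbove_range (fun i => f i (x k) + (inner ℝ (g k i) (x (k+1) - x k) : ℝ))) i
      linarith
    have := hfeas k
    rw [hF]
    linarith
  -- Per-step decrease
  have part1 : ∀ k, (1/2) * ‖x (k+1) - xstar‖^2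
      ≤ (1/2) * ‖x k - xstar‖^2 - (1/L) * (F (x (k+1)) - Fstar) := by
    intro k
    have hd := hdec k
    have hs := step k
    have : (1/L) * (F (x (k+1)) - Fstar) ≤ (1/2) * ‖x k - x (k+1)‖^2 := by
      rw [div_mul_eq_mul_div, div_le_iff₀ hL]
      nlinarith
    nlinarith
  refine ⟨part1, fun T hT => ?_⟩
  have hTpos : (0:ℝ) < T := by exact_mod_cast hT
  -- telescoping bound on the sum
  have key : ∑ k ∈ Finset.Icc 1 T, (F (x k) - Fstar) ≤ L * ‖x 0 - xstar‖^2 / 2 := by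
    have hre : ∑ k ∈ Finset.Icc 1 T, (F (x k) - Fstar)
        = ∑ k ∈ Finset.range T, (F (x (k+1)) - Fstar) := by
      rw [← Finset.Ico_add_one_right_eq_Icc, Finset.sum_Ico_eq_sum_range]
      simp [add_comm]
    rw [hre]
    have hb : ∀ k ∈ Finset.range T, F (x (k+1)) - Fstar
        ≤ L * ((1/2) * ‖x k - xstar‖^2) - L * ((1/2) * ‖x (k+1) - xstar‖^2) := by
      intro k _
      have hL' : (1/L) * (F (x (k+1)) - Fstar)
          ≤ (1/2) * ‖x k - xstar‖^2 - (1/2) * ‖x (k+1) - xstar‖^2 := by linarith [part1 k]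
      have h3 := mul_le_mul_of_nonneg_left hL' hL.le
      rw [mul_sub] at h3
      have h4 : L * ((1/L) * (F (x (k+1)) - Fstar)) = F (x (k+1)) - Fstar := by
        field_simp
      linarith
    calc ∑ k ∈ Finset.range T, (F (x (k+1)) - Fstar)
        ≤ ∑ k ∈ Finset.range T, (L * ((1/2) * ‖x k - xstar‖^2)
            - L * ((1/2) * ‖x (k+1) - xstar‖^2)) := Finset.sum_le_sum hb
      _ = L * ((1/2) * ‖x 0 - xstar‖^2) - L * ((1/2) * ‖x T - xstar‖^2) :=
          Finset.sum_range_sub' (fun k => L * ((1/2) * ‖x k - xstar‖^2)) T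
      _ ≤ L * ‖x 0 - xstar‖^2 / 2 := by nlinarith [norm_nonneg (x T - xstar), sq_nonneg ‖x T - xstar‖]
  have hsum : ∑ k ∈ Finset.Icc 1 T, (F (x k) - Fstar)
      = ∑ k ∈ Finset.Icc 1 T, F (x k) - T * Fstar := by
    rw [Finset.sum_sub_distrib]
    simp [Nat.card_Icc, mul_comm]
  rw [hsum] at key
  have e1 : (1/(T:ℝ)) * ∑ k ∈ Finset.Icc 1 T, F (x k) - Fstar
      = (1/(T:ℝ)) * (∑ k ∈ Finset.Icc 1 T, F (x k) - T * Fstar) := by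
    field_simp
  have e2 : L * ‖x 0 - xstar‖^2 / (2 * T) = (1/(T:ℝ)) * (L * ‖x 0 - xstar‖^2 / 2) := by
    ring
  rw [e1, e2]
  exact mul_le_mul_of_nonneg_left key (by positivity)
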